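/- arXiv:2211.13679 — 4 statements merged into one kernel-verified Lean document; each statement's English description precedes it below -/
import Mathlib

section
/- An injective monotone map φ : [1]^n → [1]^m obtained as a composition of face maps is uniquely determined by the pair (φ(α), φ(ω)): if φ and ψ are two such compositions of coordinate-insertion face maps with φ(α) = ψ(α) and φ(ω) = ψ(ω), then φ = ψ. -/
/-- Compositions of coordinate-insertion face maps between cubes. -/
inductive IsFaceComp : {n m : ℕ} → ((Fin n → Bool) → (Fin m → Bool)) → Prop
  | id {n : ℕ} : IsFaceComp (fun x : Fin n → Bool => x)
  | comp {n m : ℕ} (i : Fin (m + 1)) (ε : Bool) (φ : (Fin n → Bool) → (Fin m → Bool)) :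
      IsFaceComp φ → IsFaceComp (fun x => i.insertNth ε (φ x))

lemma isFaceComp_dim : ∀ {n m : ℕ} {φ : (Fin n → Bool) → (Fin m → Bool)},
    IsFaceComp φ → n ≤ m := by
  intro n m φ h
  induction h with
  | id => exact le_rfl
  | comp i ε φ hφ ih => omega

lemma isFaceComp_self_eq_id {n : ℕ} {ψ : (Fin n → Bool) → (Fin n → Bool)}
    (h : IsFaceComp ψ) : ψ = fun x => x := by
  cases h with
  | id => rfl
  | comp i ε φ hφ => exact absurd (isFaceComp_dim hφ) (by omega)

/-- range of a double `succAbove`. -/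
lemma range_succAbove_succAbove {m : ℕ} (a : Fin (m + 2)) (b : Fin (m + 1)) :
    Set.range (fun t : Fin m => a.succAbove (b.succAbove t)) = ({a, a.succAbove b}ᶜ : Set _) := by
  ext x
  simp only [Set.mem_range, Set.mem_compl_iff, Set.mem_insert_iff, Set.mem_singleton_iff, not_or]
  constructor
  · rintro ⟨t, rfl⟩
    refine ⟨Fin.succAbove_ne _ _, fun h => ?_⟩
    exact Fin.succAbove_ne b t (Fin.succAbove_right_injective h)
  · rintro ⟨hx1, hx2⟩
    obtain ⟨y, rfl⟩ := Fin.exists_succAbove_eq hx1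
    have hy : y ≠ b := fun h => hx2 (by rw [h])
    obtain ⟨t, rfl⟩ := Fin.exists_succAbove_eq hy
    exact ⟨t, rfl⟩

/-- simplicial-style commutation of indices. -/
lemma succAbove_succAbove_comm {m : ℕ} (i' : Fin (m + 2)) (k : Fin (m + 1))
    (j : Fin (m + 1)) (hj : (i'.succAbove k).succAbove j = i') (t : Fin m) :
    (i'.succAbove k).succAbove (j.succAbove t) = i'.succAbove (k.succAbove t) := by
  have hf : StrictMono (fun t : Fin m => (i'.succAbove k).succAbove (j.succAbove t)) :=
    (Fin.strictMono_succAbove (i'.succAbove k)).comp (Fin.strictMono_succAbove j)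
  have hg : StrictMono (fun t : Fin m => i'.succAbove (k.succAbove t)) :=
    (Fin.strictMono_succAbove i').comp (Fin.strictMono_succAbove k)
  have hr : Set.range (fun t : Fin m => (i'.succAbove k).succAbove (j.succAbove t)) =
      Set.range (fun t : Fin m => i'.succAbove (k.succAbove t)) := by
    rw [range_succAbove_succAbove, range_succAbove_succAbove, hj, Set.pair_comm]
  have heq := (@StrictMono.range_inj (Fin m) (Fin (m + 2)) _ _
      (inferInstanceAs (WellFoundedLT (Fin m))) _ _ hf hg).mp hr
  exact congrFun heq t

/-- a face composition that is constant at some coordinate factors through an insertion there. -/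
lemma isFaceComp_strip : ∀ {n M : ℕ} {ψ : (Fin n → Bool) → (Fin M → Bool)},
    IsFaceComp ψ → ∀ (m : ℕ) (hM : M = m + 1) (i : Fin (m + 1)) (c : Bool),
      (∀ x, ψ x (Fin.cast hM.symm i) = c) →
      ∃ ψ' : (Fin n → Bool) → (Fin m → Bool), IsFaceComp ψ' ∧
        ∀ x j, ψ x (Fin.cast hM.symm j) = (i.insertNth c (ψ' x) : Fin (m + 1) → Bool) j := by
  intro n M ψ h
  induction h with
  | id =>
    intro m hM i c hc
    subst hM
    have h1 := hc (fun _ => true)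
    have h2 := hc (fun _ => false)
    simp at h1 h2
    simp [h1] at h2
  | comp i' ε' φ hφ ih =>
    rename_i m'
    intro m hM i c hc
    have hm : m' = m := by omega
    subst hm
    have hcast : ∀ j : Fin (m' + 1), Fin.cast hM.symm j = j := fun j => rfl
    simp only [hcast] at hc ⊢
    by_cases hii : i = i'
    · subst hii
      have hce : c = ε' := by
        have := hc (fun _ => false)
        simp [Fin.insertNth_apply_same] at this
        exact this.symm
      subst hce
      exact ⟨φ, hφ, fun x j => rfl⟩
    · obtain ⟨k, hk⟩ := Fin.exists_succAbove_eq hii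
      have hck : ∀ x, φ x k = c := by
        intro x
        have := hc x
        rw [← hk, Fin.insertNth_apply_succAbove] at this
        exact this
      rcases m' with _ | m₀
      · exact k.elim0
      · obtain ⟨ψ₃, hψ₃, hfac⟩ := ih m₀ rfl k c (fun x => hck x)
        simp only [show ∀ j : Fin (m₀ + 1), Fin.cast rfl j = j from fun j => rfl] at hfac
        have hφeq : ∀ x, φ x = k.insertNth c (ψ₃ x) := fun x => funext (hfac x)
        obtain ⟨j, hj⟩ := Fin.exists_succAbove_eq (Ne.symm hii)
        have hj' : (i'.succAbove k).succAbove j = i' := by rw [hk]; exact hj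
        have key : ∀ x, i'.insertNth ε' (k.insertNth c (ψ₃ x)) =
            Fin.insertNth (α := fun _ => Bool) i c (j.insertNth ε' (ψ₃ x)) := by
          intro x
          rw [Fin.eq_insertNth_iff]
          constructor
          · rw [← hk, Fin.insertNth_apply_succAbove, Fin.insertNth_apply_same]
          · funext t
            simp only [Fin.removeNth]
            rcases eq_or_ne t j with rfl | htj
            · rw [hj, Fin.insertNth_apply_same, Fin.insertNth_apply_same]
            · obtain ⟨s, hs⟩ := Fin.exists_succAbove_eq htj
              rw [← hs, ← hk, succAbove_succAbove_comm i' k j hj' s,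
                Fin.insertNth_apply_succAbove, Fin.insertNth_apply_succAbove,
                Fin.insertNth_apply_succAbove]
        refine ⟨fun x => j.insertNth ε' (ψ₃ x), IsFaceComp.comp j ε' ψ₃ hψ₃, ?_⟩
        intro x q
        rw [hφeq x, key x]

/-- a face composition with equal endpoint values at a coordinate is constant there. -/
lemma isFaceComp_const : ∀ {n m : ℕ} {ψ : (Fin n → Bool) → (Fin m → Bool)},
    IsFaceComp ψ → ∀ i : Fin m,
      ψ (fun _ => false) i = ψ (fun _ => true) i →
      ∀ x, ψ x i = ψ (fun _ => false) i := by
  intro n m ψ h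
  induction h with
  | id => intro i hi x; simp at hi
  | comp i' ε φ hφ ih =>
    intro i hi x
    by_cases hii : i = i'
    · subst hii; simp [Fin.insertNth_apply_same]
    · obtain ⟨k, hk⟩ := Fin.exists_succAbove_eq hii
      subst hk
      simp only [Fin.insertNth_apply_succAbove] at hi ⊢
      exact ih k hi x

lemma faceComp_aux : ∀ {n m : ℕ} {φ : (Fin n → Bool) → (Fin m → Bool)},
    IsFaceComp φ → ∀ ψ : (Fin n → Bool) → (Fin m → Bool), IsFaceComp ψ →
    φ (fun _ => false) = ψ (fun _ => false) → φ (fun _ => true) = ψ (fun _ => true) →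
    φ = ψ := by
  intro n m φ h
  induction h with
  | id =>
    intro ψ hψ hα hω
    exact (isFaceComp_self_eq_id hψ).symm
  | comp i ε φ' hφ' ih =>
    rename_i m₁
    intro ψ hψ hα hω
    have hψα : ψ (fun _ => false) i = ε := by
      rw [← congrFun hα i]; simp [Fin.insertNth_apply_same]
    have hψω : ψ (fun _ => true) i = ε := by
      rw [← congrFun hω i]; simp [Fin.insertNth_apply_same]
    have hconst : ∀ x, ψ x i = ε := by
      intro x
      rw [isFaceComp_const hψ i (hψα.trans hψω.symm) x, hψα]
    obtain ⟨ψ', hψ', hfac⟩ := isFaceComp_strip hψ m₁ rfl i ε hconst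
    have hψeq : ψ = fun x => i.insertNth ε (ψ' x) := by
      funext x j
      exact hfac x j
    subst hψeq
    have hα' : φ' (fun _ => false) = ψ' (fun _ => false) := by
      have := congrArg (Fin.removeNth i) hα
      simpa [Fin.removeNth_insertNth] using this
    have hω' : φ' (fun _ => true) = ψ' (fun _ => true) := by
      have := congrArg (Fin.removeNth i) hω
      simpa [Fin.removeNth_insertNth] using this
    rw [ih ψ' hψ' hα' hω']

/-- a composition of face maps `[1]^n → [1]^m` is uniquely
determined by the images of `α = (0,...,0)` and `ω = (1,...,1)`. -/
theorem faceComp_determined_by_endpoints {n m : ℕ}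
    (φ ψ : (Fin n → Bool) → (Fin m → Bool))
    (hφ : IsFaceComp φ) (hψ : IsFaceComp ψ)
    (hα : φ (fun _ => false) = ψ (fun _ => false))
    (hω : φ (fun _ => true) = ψ (fun _ => true)) :
    φ = ψ :=
  faceComp_aux hφ ψ hψ hα hω
end

section
/- Given disjoint finite subsets A and B of {1,...,n}, the concatenation map * : Σ_A × Σ_B → Σ_{A ⊔ B}, sending a pair of arrangements (x, y) to the arrangement x followed by y, is a strictly monotone embedding of posets for the weak Bruhat orders: x ⤳_B x' and y ⤳_B y' if and only if x*y ⤳_B x'*y'. -/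
/-- One step of the (reverse right) weak Bruhat relation on lists: swap an
adjacent descent `(u, v)` with `u > v` into `(v, u)`. -/
def BruhatStep (x y : List ℕ) : Prop :=
  ∃ (l r : List ℕ) (u v : ℕ), v < u ∧ x = l ++ u :: v :: r ∧ y = l ++ v :: u :: r

lemma bruhatStep_append_right {x x' : List ℕ} (y : List ℕ) (h : BruhatStep x x') :
    BruhatStep (x ++ y) (x' ++ y) := by
  obtain ⟨l, r, u, v, huv, rfl, rfl⟩ := h
  exact ⟨l, r ++ y, u, v, huv, by simp, by simp⟩

lemma bruhatStep_append_left {x x' : List ℕ} (y : List ℕ) (h : BruhatStep x x') :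
    BruhatStep (y ++ x) (y ++ x') := by
  obtain ⟨l, r, u, v, huv, rfl, rfl⟩ := h
  exact ⟨y ++ l, r, u, v, huv, by simp, by simp⟩

lemma bruhatStep_filter (p : ℕ → Bool) {w w' : List ℕ} (h : BruhatStep w w') :
    Relation.ReflTransGen BruhatStep (w.filter p) (w'.filter p) := by
  obtain ⟨l, r, u, v, huv, rfl, rfl⟩ := h
  rw [List.filter_append, List.filter_append]
  cases pu : p u <;> cases pv : p v <;> simp only [List.filter_cons, pu, pv, if_true, if_false] <;>
    first
    | exact Relation.ReflTransGen.refl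
    | exact Relation.ReflTransGen.single ⟨l.filter p, r.filter p, u, v, huv, rfl, rfl⟩

lemma bruhatChain_filter (p : ℕ → Bool) {w w' : List ℕ}
    (h : Relation.ReflTransGen BruhatStep w w') :
    Relation.ReflTransGen BruhatStep (w.filter p) (w'.filter p) := by
  induction h with
  | refl => exact .refl
  | tail _ hstep ih => exact ih.trans (bruhatStep_filter p hstep)

/-- for disjoint `A, B ⊆ {1,...,n}`, concatenation
`Σ_A × Σ_B → Σ_{A ⊔ B}` is an embedding of weak Bruhat orders:
`x ⤳ x'` and `y ⤳ y'` if and only if `x ++ y ⤳ x' ++ y'`. -/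
theorem weakBruhat_concat_embedding (n : ℕ) (A B : Finset ℕ)
    (hA : A ⊆ Finset.Icc 1 n) (hB : B ⊆ Finset.Icc 1 n) (hAB : Disjoint A B)
    (x x' y y' : List ℕ)
    (hx : x.Nodup) (hxA : x.toFinset = A)
    (hx' : x'.Nodup) (hx'A : x'.toFinset = A)
    (hy : y.Nodup) (hyB : y.toFinset = B)
    (hy' : y'.Nodup) (hy'B : y'.toFinset = B) :
    (Relation.ReflTransGen BruhatStep x x' ∧ Relation.ReflTransGen BruhatStep y y') ↔
      Relation.ReflTransGen BruhatStep (x ++ y) (x' ++ y') := by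
  have memA : ∀ {z : List ℕ}, z.toFinset = A → ∀ a ∈ z, a ∈ A := by
    intro z hz a ha; rw [← hz]; simpa using ha
  have memB : ∀ {z : List ℕ}, z.toFinset = B → ∀ a ∈ z, a ∈ B := by
    intro z hz a ha; rw [← hz]; simpa using ha
  have filterA : ∀ {z w : List ℕ}, z.toFinset = A → w.toFinset = B →
      (z ++ w).filter (fun a => decide (a ∈ A)) = z := by
    intro z w hz hw
    rw [List.filter_append, List.filter_eq_self.2 (fun a ha => by
        simpa using memA hz a ha),
      List.filter_eq_nil_iff.2 (fun a ha => by
        simpa using Finset.disjoint_right.1 hAB (memB hw a ha)), List.append_nil]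
  have filterB : ∀ {z w : List ℕ}, z.toFinset = A → w.toFinset = B →
      (z ++ w).filter (fun a => decide (a ∈ B)) = w := by
    intro z w hz hw
    rw [List.filter_append, List.filter_eq_nil_iff.2 (fun a ha => by
        simpa using Finset.disjoint_left.1 hAB (memA hz a ha)),
      List.filter_eq_self.2 (fun a ha => by simpa using memB hw a ha), List.nil_append]
  constructor
  · rintro ⟨h1, h2⟩
    exact (Relation.ReflTransGen.lift (· ++ y)
          (fun _ _ h => bruhatStep_append_right y h) _ _ h1).trans
      (Relation.ReflTransGen.lift (x' ++ ·)
          (fun _ _ h => bruhatStep_append_left x' h) _ _ h2)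
  · intro h
    have projA := bruhatChain_filter (fun a => decide (a ∈ A)) h
    have projB := bruhatChain_filter (fun a => decide (a ∈ B)) h
    rw [filterA hxA hyB, filterA hx'A hy'B] at projA
    rw [filterB hxA hyB, filterB hx'A hy'B] at projB
    exact ⟨projA, projB⟩
end

section
/- For subsets a ⊆ b of {1,...,n} with sup a ≤ sup b (setting sup ∅ = 0), the map ψ sending an arrangement (x_1,...,x_k) of b \ a to the set {x_l | x_p < x_l for all p < l} ∩ (sup a, sup b) (open interval of integers) is monotone from the weak Bruhat order on Σ_{b\a} to the inclusion order on subsets of the interval (sup a, sup b): if x ⤳_B y then ψ(x) ⊆ ψ(y). -/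
/-- The set of left-to-right maxima of a list: entries strictly greater than
all earlier entries. -/
def ltrMaxima (w : List ℕ) : Set ℕ :=
  {z | ∃ l, l < w.length ∧ w.getD l 0 = z ∧ ∀ p < l, w.getD p 0 < z}

/-- The map `ψ`: left-to-right maxima lying strictly between `sup a` and `sup b`. -/
def psiMap (a b : Finset ℕ) (w : List ℕ) : Set ℕ :=
  ltrMaxima w ∩ Set.Ioo (a.sup id) (b.sup id)

lemma getD_mid_left (l r : List ℕ) (u v : ℕ) :
    (l ++ u :: v :: r).getD l.length 0 = u := by
  rw [List.getD_append_right _ _ _ _ le_rfl]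
  simp

lemma getD_mid_right (l r : List ℕ) (u v : ℕ) :
    (l ++ u :: v :: r).getD (l.length + 1) 0 = v := by
  rw [List.getD_append_right _ _ _ _ (by omega)]
  simp

lemma getD_swap_eq (l r : List ℕ) (u v : ℕ) (p : ℕ)
    (h1 : p ≠ l.length) (h2 : p ≠ l.length + 1) :
    (l ++ v :: u :: r).getD p 0 = (l ++ u :: v :: r).getD p 0 := by
  rcases lt_or_ge p l.length with h | h
  · rw [List.getD_append _ _ _ _ h, List.getD_append _ _ _ _ h]
  · rw [List.getD_append_right _ _ _ _ h, List.getD_append_right _ _ _ _ h]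
    obtain ⟨m, hm⟩ : ∃ m, p - l.length = m + 2 := ⟨p - l.length - 2, by omega⟩
    rw [hm]
    simp

lemma ltrMaxima_step_subset {x y : List ℕ} (h : BruhatStep x y) :
    ltrMaxima x ⊆ ltrMaxima y := by
  obtain ⟨l, r, u, v, huv, hx, hy⟩ := h
  subst hx hy
  intro z hz
  obtain ⟨ℓ, hlen, hget, hmax⟩ := hz
  have hlen' : (l ++ v :: u :: r).length = (l ++ u :: v :: r).length := by simp
  rcases lt_trichotomy ℓ l.length with hc | hc | hc
  · -- position inside `l`: unchanged
    refine ⟨ℓ, by omega, ?_, ?_⟩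
    · rw [getD_swap_eq _ _ _ _ _ (by omega) (by omega)]; exact hget
    · intro p hp
      rw [getD_swap_eq _ _ _ _ _ (by omega) (by omega)]
      exact hmax p hp
  · -- position `L`: the value is `u`; it moves to position `L + 1`
    subst hc
    have hu : z = u := by rw [← hget, getD_mid_left]
    refine ⟨l.length + 1, by simp, ?_, ?_⟩
    · rw [getD_mid_right]; exact hu.symm
    · intro p hp
      rcases lt_or_ge p l.length with hpl | hpl
      · rw [getD_swap_eq _ _ _ _ _ (by omega) (by omega)]
        exact hmax p hpl
      · have : p = l.length := by omega
        subst this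
        rw [getD_mid_left]
        omega
  · -- position `> L`.  It cannot be `L + 1` (since `v < u`); otherwise unchanged
    rcases eq_or_ne ℓ (l.length + 1) with hc1 | hc1
    · exfalso
      have h1 : (l ++ u :: v :: r).getD l.length 0 < z := hmax l.length (by omega)
      rw [getD_mid_left] at h1
      rw [hc1, getD_mid_right] at hget
      omega
    · refine ⟨ℓ, by omega, ?_, ?_⟩
      · rw [getD_swap_eq _ _ _ _ _ (by omega) hc1]; exact hget
      · intro p hp
        rcases eq_or_ne p l.length with rfl | hp1
        · rw [getD_mid_left]
          have := hmax (l.length + 1) (by omega)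
          rw [getD_mid_right] at this
          exact this
        · rcases eq_or_ne p (l.length + 1) with rfl | hp2
          · rw [getD_mid_right]
            have := hmax l.length (by omega)
            rw [getD_mid_left] at this
            exact this
          · rw [getD_swap_eq _ _ _ _ _ hp1 hp2]
            exact hmax p hp

/-- `ψ` is monotone from the weak Bruhat order on arrangements
of `b \ a` to the inclusion order: if `x ⤳_B y` then `ψ(x) ⊆ ψ(y)`. -/
theorem psi_monotone (n : ℕ) (a b : Finset ℕ) (hab : a ⊆ b)
    (hb : b ⊆ Finset.Icc 1 n) (hsup : a.sup id ≤ b.sup id)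
    (x y : List ℕ)
    (hx : x.Nodup) (hxA : x.toFinset = b \ a)
    (hy : y.Nodup) (hyA : y.toFinset = b \ a)
    (hxy : Relation.ReflTransGen BruhatStep x y) :
    psiMap a b x ⊆ psiMap a b y := by
  clear hab hb hsup hx hxA hy hyA
  induction hxy with
  | refl => exact subset_rfl
  | tail hstep hltr ih =>
      exact ih.trans (Set.inter_subset_inter_left _ (ltrMaxima_step_subset hltr))
end

section
/- The map ψ of left-to-right maxima is compatible with concatenation: for a ⊆ b ⊆ c subsets of {1,...,n} with sup a < sup b < sup c, arrangements x ∈ Σ_{b\a} and y ∈ Σ_{c\b}, and z the concatenation of x and y (an arrangement of c \ a), one has ψ_{a,c}(z) = ψ_{a,b}(x) ∪ {sup b} ∪ ψ_{b,c}(y), where ψ_{u,v}(w) = {w_l | ∀p<l, w_p < w_l} ∩ (sup u, sup v). -/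
/-- Every left-to-right maximum is an entry of the list. -/
lemma mem_of_ltrMaxima {w : List ℕ} {z : ℕ} (h : z ∈ ltrMaxima w) : z ∈ w := by
  obtain ⟨l, hl, hz, -⟩ := h
  rw [List.getD_eq_getElem w 0 hl] at hz
  exact hz ▸ List.getElem_mem hl

/-- The maximum of a duplicate-free list is a left-to-right maximum. -/
lemma max_mem_ltrMaxima {w : List ℕ} {m : ℕ} (hw : w.Nodup) (hm : m ∈ w)
    (hmax : ∀ t ∈ w, t ≤ m) : m ∈ ltrMaxima w := by
  obtain ⟨i, hi, hig⟩ := List.mem_iff_getElem.mp hm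
  refine ⟨i, hi, by rw [List.getD_eq_getElem w 0 hi, hig], fun p hp => ?_⟩
  have hpi : p < w.length := hp.trans hi
  rw [List.getD_eq_getElem w 0 hpi]
  have hle : w[p] ≤ m := hmax _ (List.getElem_mem hpi)
  have hne : w[p] ≠ m := by
    rw [← hig]
    intro hcon
    exact absurd ((hw.getElem_inj_iff).mp hcon) hp.ne
  exact lt_of_le_of_ne hle hne

/-- Left-to-right maxima of a concatenation. -/
lemma ltrMaxima_append (x y : List ℕ) :
    ltrMaxima (x ++ y) = ltrMaxima x ∪ {z ∈ ltrMaxima y | ∀ t ∈ x, t < z} := by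
  ext z
  constructor
  · rintro ⟨l, hl, hz, hmax⟩
    rcases lt_or_ge l x.length with hlt | hge
    · left
      refine ⟨l, hlt, ?_, fun p hp => ?_⟩
      · rwa [List.getD_append x y 0 l hlt] at hz
      · have := hmax p hp
        rwa [List.getD_append x y 0 p (hp.trans hlt)] at this
    · right
      rw [List.length_append] at hl
      have hm : l - x.length < y.length := by omega
      refine ⟨⟨l - x.length, hm, ?_, fun p hp => ?_⟩, fun t ht => ?_⟩
      · rwa [List.getD_append_right x y 0 l hge] at hz
      · have hpl : x.length + p < l := by omega
        have := hmax (x.length + p) hpl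
        rwa [List.getD_append_right x y 0 (x.length + p) (by omega),
          Nat.add_sub_cancel_left] at this
      · obtain ⟨i, hi, hig⟩ := List.mem_iff_getElem.mp ht
        have := hmax i (lt_of_lt_of_le hi hge)
        rwa [List.getD_append x y 0 i hi, List.getD_eq_getElem x 0 hi, hig] at this
  · rintro (⟨l, hl, hz, hmax⟩ | ⟨⟨l, hl, hz, hmax⟩, hall⟩)
    · refine ⟨l, by rw [List.length_append]; omega, ?_, fun p hp => ?_⟩
      · rwa [List.getD_append x y 0 l hl]
      · rw [List.getD_append x y 0 p (hp.trans hl)]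
        exact hmax p hp
    · refine ⟨x.length + l, by rw [List.length_append]; omega, ?_, fun p hp => ?_⟩
      · rwa [List.getD_append_right x y 0 _ (Nat.le_add_right _ _),
          Nat.add_sub_cancel_left]
      · rcases lt_or_ge p x.length with hplt | hpge
        · rw [List.getD_append x y 0 p hplt, List.getD_eq_getElem x 0 hplt]
          exact hall _ (List.getElem_mem hplt)
        · rw [List.getD_append_right x y 0 p hpge]
          exact hmax _ (by omega)

/-- `ψ` is compatible with concatenation: for `a ⊆ b ⊆ c` with
`sup a < sup b < sup c`, an arrangement `x` of `b \ a` and an arrangement `y`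
of `c \ b`, one has `ψ_{a,c}(x ++ y) = ψ_{a,b}(x) ∪ {sup b} ∪ ψ_{b,c}(y)`. -/
theorem psi_concat (n : ℕ) (a b c : Finset ℕ)
    (hab : a ⊆ b) (hbc : b ⊆ c) (hc : c ⊆ Finset.Icc 1 n)
    (hsup1 : a.sup id < b.sup id) (hsup2 : b.sup id < c.sup id)
    (x y : List ℕ)
    (hx : x.Nodup) (hxA : x.toFinset = b \ a)
    (hy : y.Nodup) (hyB : y.toFinset = c \ b) :
    psiMap a c (x ++ y) = psiMap a b x ∪ {b.sup id} ∪ psiMap b c y := by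
  have hble : ∀ t ∈ x, t ≤ b.sup id := by
    intro t ht
    have : t ∈ b := (Finset.mem_sdiff.mp (hxA ▸ List.mem_toFinset.mpr ht)).1
    exact Finset.le_sup (f := id) this
  have hbne : b.Nonempty := by
    rcases Finset.eq_empty_or_nonempty b with h | h
    · simp [h] at hsup1
    · exact h
  have hsbmem : b.sup id ∈ x := by
    obtain ⟨i, hi, hig⟩ := Finset.exists_mem_eq_sup b hbne id
    rw [List.mem_toFinset.symm, hxA, Finset.mem_sdiff]
    refine ⟨hig ▸ hi, fun hia => ?_⟩
    exact absurd (Finset.le_sup (f := id) hia) (not_le.mpr hsup1)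
  have hsbltr : b.sup id ∈ ltrMaxima x := max_mem_ltrMaxima hx hsbmem hble
  unfold psiMap
  rw [ltrMaxima_append]
  ext z
  simp only [Set.mem_inter_iff, Set.mem_union, Set.mem_Ioo, Set.mem_setOf_eq,
    Set.mem_singleton_iff]
  constructor
  · rintro ⟨hltr | ⟨hltr, hall⟩, haz, hzc⟩
    · have hzx : z ∈ x := mem_of_ltrMaxima hltr
      have hzle : z ≤ b.sup id := hble z hzx
      rcases lt_or_eq_of_le hzle with h | h
      · exact Or.inl (Or.inl ⟨hltr, haz, h⟩)
      · exact Or.inl (Or.inr h)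
    · have : b.sup id < z := hall _ hsbmem
      exact Or.inr ⟨hltr, this, hzc⟩
  · rintro ((⟨hltr, haz, hzb⟩ | rfl) | ⟨hltr, hbz, hzc⟩)
    · exact ⟨Or.inl hltr, haz, hzb.trans hsup2⟩
    · exact ⟨Or.inl hsbltr, hsup1, hsup2⟩
    · exact ⟨Or.inr ⟨hltr, fun t ht => lt_of_le_of_lt (hble t ht) hbz⟩,
        hsup1.trans hbz, hzc⟩
end
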